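/- If the compatibility condition h ∘ T_σ^μ = T_σ^{h_♯μ} holds σ-a.e. for measurable maps h, then for two maps h₁, h₂ satisfying it with respect to the same μ, the LOT distance between h₁_♯μ and h₂_♯μ equals ‖h₁ ∘ T_σ^μ − h₂ ∘ T_σ^μ‖_{L²(σ)} = ‖h₁ − h₂‖_{L²(μ)}. -/
import Mathlib


open MeasureTheory

/-- If the compatibility condition `hᵢ ∘ T_σ^μ = T_σ^{(hᵢ)_♯μ}` holds `σ`-a.e. for two maps
`h₁, h₂`, then the LOT distance between `(h₁)_♯μ` and `(h₂)_♯μ` equals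
`‖h₁ ∘ T_σ^μ − h₂ ∘ T_σ^μ‖_{L²(σ)} = ‖h₁ − h₂‖_{L²(μ)}`. -/
theorem lot_dist_of_compatible {d : ℕ}
    (σ μ : Measure (EuclideanSpace ℝ (Fin d)))
    [IsProbabilityMeasure σ] [IsProbabilityMeasure μ]
    (T T1 T2 h₁ h₂ : EuclideanSpace ℝ (Fin d) → EuclideanSpace ℝ (Fin d))
    (hT : Measurable T) (hh₁ : Measurable h₁) (hh₂ : Measurable h₂)
    (hpush : σ.map T = μ)
    (hpush1 : σ.map T1 = μ.map h₁) (hpush2 : σ.map T2 = μ.map h₂)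
    (hcompat1 : T1 =ᵐ[σ] fun x => h₁ (T x))
    (hcompat2 : T2 =ᵐ[σ] fun x => h₂ (T x)) :
    Real.sqrt (∫ x, ‖T1 x - T2 x‖ ^ 2 ∂σ) =
        Real.sqrt (∫ x, ‖h₁ (T x) - h₂ (T x)‖ ^ 2 ∂σ) ∧
      Real.sqrt (∫ x, ‖h₁ (T x) - h₂ (T x)‖ ^ 2 ∂σ) =
        Real.sqrt (∫ y, ‖h₁ y - h₂ y‖ ^ 2 ∂μ) := by
  constructor
  · refine congrArg Real.sqrt (integral_congr_ae ?_)
    filter_upwards [hcompat1, hcompat2] with x h1 h2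
    rw [h1, h2]
  · refine congrArg Real.sqrt ?_
    rw [← hpush]
    exact (integral_map hT.aemeasurable
      ((hh₁.sub hh₂).norm.pow_const 2).aestronglyMeasurable).symm
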